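/- Let π : [0,1] → ℝ be nondecreasing, μ a Borel probability measure on [0,1], and k ∈ (0,1). Suppose α ∈ [0,1] satisfies μ([α,1]) = k (i.e. the threshold exactly exhausts the budget). Then for every nondecreasing f : [0,1] → [0,1] with ∫ f dμ = k, we have ∫_{[α,1]} π dμ ≥ ∫ π·f dμ. In other words, the indicator of the upper set [α,1] maximizes ∫ π·f dμ among all feasible monotone allocation rules. -/

import Mathlib

open MeasureTheory

/-- If `π` is nondecreasing and the threshold `α` exactly exhausts the budget,
`μ([α,1]) = k`, then the indicator of `[α,1]` maximizes `∫ π f dμ` among all monotone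
`[0,1]`-valued `f` with `∫ f dμ = k`. -/
theorem stmt_7 (μ : Measure unitInterval) [IsProbabilityMeasure μ]
    (π : unitInterval → ℝ) (hπ : Monotone π)
    (k : ℝ) (hk : k ∈ Set.Ioo (0:ℝ) 1)
    (α : unitInterval) (hα : (μ (Set.Ici α)).toReal = k)
    (f : unitInterval → ℝ) (hfm : Monotone f)
    (hfv : ∀ x, f x ∈ Set.Icc (0:ℝ) 1) (hfb : ∫ x, f x ∂μ = k) :
    (∫ x in Set.Ici α, π x ∂μ) ≥ ∫ x, π x * f x ∂μ := by
  have hπmeas : Measurable π := hπ.measurable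
  have hfmeas : Measurable f := hfm.measurable
  set C : ℝ := max |π 0| |π 1| with hC
  have hπbd : ∀ x, ‖π x‖ ≤ C := by
    intro x
    exact abs_le_max_abs_abs (hπ unitInterval.nonneg') (hπ unitInterval.le_one')
  have hπint : Integrable π μ := by
    refine (integrable_const C).mono' hπmeas.aestronglyMeasurable ?_
    filter_upwards with x using hπbd x
  have hπfint : Integrable (fun x => π x * f x) μ := by
    refine (integrable_const C).mono' (hπmeas.mul hfmeas).aestronglyMeasurable ?_
    filter_upwards with x
    have h1 := (hfv x).1
    have h2 := (hfv x).2
    calc ‖π x * f x‖ = ‖π x‖ * ‖f x‖ := norm_mul _ _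
      _ ≤ C * 1 := by
          apply mul_le_mul (hπbd x) _ (norm_nonneg _) (le_trans (norm_nonneg _) (hπbd x))
          rw [Real.norm_eq_abs, abs_le]; exact ⟨by linarith, h2⟩
      _ = C := mul_one C
  have hfint : Integrable f μ := by
    refine (integrable_const (1:ℝ)).mono' hfmeas.aestronglyMeasurable ?_
    filter_upwards with x
    rw [Real.norm_eq_abs, abs_le]
    exact ⟨by linarith [(hfv x).1], (hfv x).2⟩
  have hs : MeasurableSet (Set.Ici α) := measurableSet_Ici
  have hindint : Integrable ((Set.Ici α).indicator π) μ := hπint.indicator hs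
  have hind1int : Integrable ((Set.Ici α).indicator (fun _ => (1:ℝ))) μ :=
    (integrable_const (1:ℝ)).indicator hs
  -- pointwise inequality
  have key : ∀ x, π α * ((Set.Ici α).indicator (fun _ => (1:ℝ)) x - f x) ≤
      (Set.Ici α).indicator π x - π x * f x := by
    intro x
    by_cases hx : x ∈ Set.Ici α
    · simp only [Set.indicator_of_mem hx]
      have h1 : π α ≤ π x := hπ hx
      have h2 : 0 ≤ 1 - f x := by linarith [(hfv x).2]
      nlinarith
    · simp only [Set.indicator_of_notMem hx]
      have h1 : π x ≤ π α := hπ (le_of_not_ge (by simpa [Set.mem_Ici] using hx))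
      have h2 : 0 ≤ f x := (hfv x).1
      nlinarith
  have hmono : ∫ x, π α * ((Set.Ici α).indicator (fun _ => (1:ℝ)) x - f x) ∂μ ≤
      ∫ x, ((Set.Ici α).indicator π x - π x * f x) ∂μ :=
    integral_mono ((hind1int.sub hfint).const_mul (π α)) (hindint.sub hπfint) key
  have hL : ∫ x, π α * ((Set.Ici α).indicator (fun _ => (1:ℝ)) x - f x) ∂μ = 0 := by
    rw [integral_const_mul, integral_sub hind1int hfint, hfb, integral_indicator_const _ hs]
    simp [measureReal_def, hα]
  have hR : ∫ x, ((Set.Ici α).indicator π x - π x * f x) ∂μ =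
      (∫ x in Set.Ici α, π x ∂μ) - ∫ x, π x * f x ∂μ := by
    rw [integral_sub hindint hπfint, integral_indicator hs]
  rw [hL, hR] at hmono
  linarith
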